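/- The number -1/(2 sin(3π/26)) is a root of x^6 - 3x^5 - 6x^4 + 4x^3 + 5x^2 - x - 1 and has absolute value strictly greater than 1. -/

import Mathlib

open Real

theorem cheb13 (a : ℝ) : Real.cos (13*a) = 4096*Real.cos a^13 - 13312*Real.cos a^11 + 16640*Real.cos a^9 - 9984*Real.cos a^7 + 2912*Real.cos a^5 - 364*Real.cos a^3 + 13*Real.cos a := by
  have hrec : ∀ k : ℝ, Real.cos ((k+1)*a) = 2*Real.cos (k*a)*Real.cos a - Real.cos ((k-1)*a) := by
    intro k
    have h1 := Real.cos_add (k*a) a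
    have h2 := Real.cos_sub (k*a) a
    have e1 : (k+1)*a = k*a+a := by ring
    have e2 : (k-1)*a = k*a-a := by ring
    rw [e1, e2]
    linarith
  have e2 : Real.cos (2*a) = 2*Real.cos a^2 - 1 := by
    have h := hrec 1
    norm_num at h
    rw [h]; ring
  have e3 : Real.cos (3*a) = 4*Real.cos a^3 - 3*Real.cos a := by
    have h := hrec 2
    norm_num at h
    rw [e2] at h
    rw [h]; ring
  have e4 : Real.cos (4*a) = 8*Real.cos a^4 - 8*Real.cos a^2 + 1 := by
    have h := hrec 3
    norm_num at h
    rw [e3, e2] at h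
    rw [h]; ring
  have e5 : Real.cos (5*a) = 16*Real.cos a^5 - 20*Real.cos a^3 + 5*Real.cos a := by
    have h := hrec 4
    norm_num at h
    rw [e4, e3] at h
    rw [h]; ring
  have e6 : Real.cos (6*a) = 32*Real.cos a^6 - 48*Real.cos a^4 + 18*Real.cos a^2 - 1 := by
    have h := hrec 5
    norm_num at h
    rw [e5, e4] at h
    rw [h]; ring
  have e7 : Real.cos (7*a) = 64*Real.cos a^7 - 112*Real.cos a^5 + 56*Real.cos a^3 - 7*Real.cos a := by
    have h := hrec 6
    norm_num at h
    rw [e6, e5] at h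
    rw [h]; ring
  have e8 : Real.cos (8*a) = 128*Real.cos a^8 - 256*Real.cos a^6 + 160*Real.cos a^4 - 32*Real.cos a^2 + 1 := by
    have h := hrec 7
    norm_num at h
    rw [e7, e6] at h
    rw [h]; ring
  have e9 : Real.cos (9*a) = 256*Real.cos a^9 - 576*Real.cos a^7 + 432*Real.cos a^5 - 120*Real.cos a^3 + 9*Real.cos a := by
    have h := hrec 8
    norm_num at h
    rw [e8, e7] at h
    rw [h]; ring
  have e10 : Real.cos (10*a) = 512*Real.cos a^10 - 1280*Real.cos a^8 + 1120*Real.cos a^6 - 400*Real.cos a^4 + 50*Real.cos a^2 - 1 := by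
    have h := hrec 9
    norm_num at h
    rw [e9, e8] at h
    rw [h]; ring
  have e11 : Real.cos (11*a) = 1024*Real.cos a^11 - 2816*Real.cos a^9 + 2816*Real.cos a^7 - 1232*Real.cos a^5 + 220*Real.cos a^3 - 11*Real.cos a := by
    have h := hrec 10
    norm_num at h
    rw [e10, e9] at h
    rw [h]; ring
  have e12 : Real.cos (12*a) = 2048*Real.cos a^12 - 6144*Real.cos a^10 + 6912*Real.cos a^8 - 3584*Real.cos a^6 + 840*Real.cos a^4 - 72*Real.cos a^2 + 1 := by
    have h := hrec 11
    norm_num at h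
    rw [e11, e10] at h
    rw [h]; ring
  have e13 : Real.cos (13*a) = 4096*Real.cos a^13 - 13312*Real.cos a^11 + 16640*Real.cos a^9 - 9984*Real.cos a^7 + 2912*Real.cos a^5 - 364*Real.cos a^3 + 13*Real.cos a := by
    have h := hrec 12
    norm_num at h
    rw [e12, e11] at h
    rw [h]; ring
  exact e13

theorem sextic : 64*Real.sin (3*π/26)^6 - 32*Real.sin (3*π/26)^5 - 80*Real.sin (3*π/26)^4
    + 32*Real.sin (3*π/26)^3 + 24*Real.sin (3*π/26)^2 - 6*Real.sin (3*π/26) - 1 = 0 := by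
  have hsc : Real.sin (3*π/26) = Real.cos (5*π/13) := by
    rw [← Real.cos_pi_div_two_sub]
    congr 1
    ring
  set c : ℝ := Real.cos (5*π/13) with hc
  have h13 : Real.cos (13*(5*π/13)) = -1 := by
    have : (13:ℝ)*(5*π/13) = π + 2*π + 2*π := by ring
    rw [this, Real.cos_add_two_pi, Real.cos_add_two_pi, Real.cos_pi]
  have hT := cheb13 (5*π/13)
  rw [h13] at hT
  -- (c+1) * (64c^6-32c^5-80c^4+32c^3+24c^2-6c-1)^2 = 0
  have hfac : (c+1) * (64*c^6 - 32*c^5 - 80*c^4 + 32*c^3 + 24*c^2 - 6*c - 1)^2 = 0 := by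
    linear_combination -hT
  have hcpos : 0 < c := by
    rw [← hsc]
    apply Real.sin_pos_of_pos_of_lt_pi
    · positivity
    · nlinarith [Real.pi_pos]
  have h1 : c + 1 ≠ 0 := by positivity
  have hsq : (64*c^6 - 32*c^5 - 80*c^4 + 32*c^3 + 24*c^2 - 6*c - 1)^2 = 0 := by
    rcases mul_eq_zero.mp hfac with h | h
    · exact absurd h h1
    · exact h
  have := pow_eq_zero_iff (n := 2) (by norm_num) |>.mp hsq
  rw [hsc]
  linarith [this]

theorem stmt9 :
    ((-1 / (2 * Real.sin (3 * π / 26)))^6 - 3 * (-1 / (2 * Real.sin (3 * π / 26)))^5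
      - 6 * (-1 / (2 * Real.sin (3 * π / 26)))^4 + 4 * (-1 / (2 * Real.sin (3 * π / 26)))^3
      + 5 * (-1 / (2 * Real.sin (3 * π / 26)))^2 - (-1 / (2 * Real.sin (3 * π / 26))) - 1 = 0)
    ∧ 1 < |(-1 / (2 * Real.sin (3 * π / 26)) : ℝ)| := by
  have hpi := Real.pi_pos
  have hspos : 0 < Real.sin (3*π/26) := by
    apply Real.sin_pos_of_pos_of_lt_pi
    · positivity
    · nlinarith
  have hs6 := sextic
  set s : ℝ := Real.sin (3*π/26) with hs
  constructor
  · have hne : (2:ℝ) * s ≠ 0 := by positivity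
    field_simp
    linear_combination -hs6
  · have hslt : s < 1/2 := by
      have h2 : s < 3*π/26 := by
        rw [hs]
        exact Real.sin_lt (by positivity)
      have h3 : π < 3.15 := Real.pi_lt_d2
      nlinarith
    rw [abs_div, abs_neg, abs_one, abs_of_pos (by positivity : (0:ℝ) < 2*s)]
    rw [one_lt_div (by positivity : (0:ℝ) < 2*s)]
    linarith
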